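/- Let m ≥ 2 be an integer, r₀ > 0, and let B ⊂ ℝ^m be the open ball of radius r₀ centered at the origin. Let u be a C¹ function on the closed ball B̄ vanishing on the boundary sphere ∂B, and let φ be a C¹ function on B̄ with φ(0) = 0. Then the functions x ↦ φ(x) ⟨∇u(x), x/‖x‖⟩ and x ↦ u(x) (⟨∇φ(x), x/‖x‖⟩ + (m−1) φ(x)/‖x‖), defined for x ≠ 0, are integrable on B, and ∫_B φ(x) ⟨∇u(x), x/‖x‖⟩ dx = −∫_B u(x) (⟨∇φ(x), x/‖x‖⟩ + (m−1) φ(x)/‖x‖) dx. -/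

import Mathlib

open MeasureTheory Set
open scoped RealInnerProductSpace

noncomputable section

abbrev E (m : ℕ) := EuclideanSpace ℝ (Fin m)

private lemma inner_gradient_eq' {m : ℕ} (f : E m → ℝ) (x y : E m) :
    ⟪gradient f x, y⟫ = fderiv ℝ f x y := by
  rw [gradient, ← InnerProductSpace.toDual_apply_apply, LinearIsometryEquiv.apply_symm_apply]

/-- Integration by parts along a single ray. -/
private lemma ray_ibp' (m : ℕ) (hm : 2 ≤ m) (r₀ : ℝ) (hr : 0 < r₀)
    (u φ : E m → ℝ)
    (hu : ContDiffOn ℝ 1 u (Metric.closedBall 0 r₀))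
    (hu0 : ∀ x ∈ Metric.sphere (0 : E m) r₀, u x = 0)
    (hφ : ContDiffOn ℝ 1 φ (Metric.closedBall 0 r₀))
    (ω : E m) (hω : ‖ω‖ = 1) :
    ∫ r in Ioo (0:ℝ) r₀, r ^ (m-1) *
      (φ (r • ω) * ⟪gradient u (r • ω), ‖r • ω‖⁻¹ • (r • ω)⟫ +
       u (r • ω) * (⟪gradient φ (r • ω), ‖r • ω‖⁻¹ • (r • ω)⟫ +
         ((m:ℝ)-1) * φ (r • ω) / ‖r • ω‖)) = 0 := by
  set K := Metric.closedBall (0 : E m) r₀ with hKdef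
  have hud : UniqueDiffOn ℝ K := uniqueDiffOn_convex (convex_closedBall _ _)
    (by rw [interior_closedBall _ hr.ne']; exact ⟨0, Metric.mem_ball_self hr⟩)
  set h : E m → ℝ := fun x => u x * φ x with hhdef
  have hh : ContDiffOn ℝ 1 h K := hu.mul hφ
  set Dh : E m → (E m →L[ℝ] ℝ) := fderivWithin ℝ h K with hDhdef
  have hDh : ContinuousOn Dh K := hh.continuousOn_fderivWithin hud le_rfl
  have hnorm : ∀ r : ℝ, 0 ≤ r → ‖r • ω‖ = r := fun r hr' => by
    rw [norm_smul, hω, mul_one, Real.norm_eq_abs, abs_of_nonneg hr']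
  have hray : ∀ r ∈ Icc (0:ℝ) r₀, r • ω ∈ K := fun r hrm => by
    rw [hKdef, Metric.mem_closedBall, dist_zero_right, hnorm r hrm.1]; exact hrm.2
  have hrayB : ∀ r ∈ Ioo (0:ℝ) r₀, r • ω ∈ Metric.ball (0 : E m) r₀ := fun r hrm => by
    rw [Metric.mem_ball, dist_zero_right, hnorm r hrm.1.le]; exact hrm.2
  have hmemK : ∀ x ∈ Metric.ball (0 : E m) r₀, K ∈ nhds x := fun x hx =>
    Filter.mem_of_superset (Metric.isOpen_ball.mem_nhds hx) Metric.ball_subset_closedBall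
  set Ψ : ℝ → ℝ := fun r => ((m:ℝ)-1) * r^(m-2) * h (r • ω) + r^(m-1) * (Dh (r • ω) ω)
    with hΨdef
  set ψ : ℝ → ℝ := fun r => r^(m-1) * h (r • ω) with hψdef
  have hcongr : EqOn (fun r : ℝ => r ^ (m-1) *
      (φ (r • ω) * ⟪gradient u (r • ω), ‖r • ω‖⁻¹ • (r • ω)⟫ +
       u (r • ω) * (⟪gradient φ (r • ω), ‖r • ω‖⁻¹ • (r • ω)⟫ +
         ((m:ℝ)-1) * φ (r • ω) / ‖r • ω‖))) Ψ (Ioo 0 r₀) := by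
    intro r hrm
    have hr0 : (0:ℝ) < r := hrm.1
    have hxB := hrayB r hrm
    have hn : ‖r • ω‖ = r := hnorm r hr0.le
    have hdir : ‖r • ω‖⁻¹ • (r • ω) = ω := by rw [hn]; exact inv_smul_smul₀ hr0.ne' ω
    have hdu : DifferentiableAt ℝ u (r • ω) :=
      ((hu.differentiableOn one_ne_zero) _ (Metric.ball_subset_closedBall hxB)).differentiableAt
        (hmemK _ hxB)
    have hdφ : DifferentiableAt ℝ φ (r • ω) :=
      ((hφ.differentiableOn one_ne_zero) _ (Metric.ball_subset_closedBall hxB)).differentiableAt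
        (hmemK _ hxB)
    have hDheq : Dh (r • ω) = u (r • ω) • fderiv ℝ φ (r • ω) + φ (r • ω) • fderiv ℝ u (r • ω) := by
      rw [hDhdef, fderivWithin_of_mem_nhds (hmemK _ hxB), hhdef, fderiv_fun_mul hdu hdφ]
    simp only [hΨdef, hdir, inner_gradient_eq', hDheq, ContinuousLinearMap.add_apply,
      ContinuousLinearMap.coe_smul', Pi.smul_apply, smul_eq_mul, hn,
      inv_smul_smul₀ hr0.ne', hhdef]
    have hpow : r^(m-1) = r^(m-2) * r := by rw [← pow_succ]; congr 1; omega
    rw [hpow]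
    field_simp
    ring
  rw [setIntegral_congr_fun measurableSet_Ioo hcongr, ← integral_Ioc_eq_integral_Ioo,
    ← intervalIntegral.integral_of_le hr.le]
  have hcont : ContinuousOn ψ (Icc 0 r₀) := by
    apply ContinuousOn.mul (continuous_pow (m-1)).continuousOn
    exact (hu.continuousOn.mul hφ.continuousOn).comp
      ((continuous_id.smul continuous_const).continuousOn) hray
  have hderiv : ∀ r ∈ Ioo (0:ℝ) r₀, HasDerivAt ψ (Ψ r) r := by
    intro r hrm
    have hxB := hrayB r hrm
    have h1 : HasDerivAt (fun s : ℝ => s ^ (m-1)) (((m-1:ℕ):ℝ) * r^(m-1-1)) r :=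
      hasDerivAt_pow (m-1) r
    have hdh : DifferentiableAt ℝ h (r • ω) :=
      ((hh.differentiableOn one_ne_zero) _ (Metric.ball_subset_closedBall hxB)).differentiableAt
        (hmemK _ hxB)
    have hg : HasDerivAt (fun s : ℝ => s • ω) ω r := by
      simpa using (hasDerivAt_id r).smul_const ω
    have h2 : HasDerivAt (fun s : ℝ => h (s • ω)) (Dh (r • ω) ω) r := by
      have := hdh.hasFDerivAt.comp_hasDerivAt r hg
      rwa [show fderiv ℝ h (r • ω) = Dh (r • ω) from
        (fderivWithin_of_mem_nhds (hmemK _ hxB)).symm] at this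
    have := h1.mul h2
    have hc1 : ((m-1:ℕ):ℝ) = (m:ℝ) - 1 := by
      rw [Nat.cast_sub (by omega)]; norm_num
    have hc2 : m - 1 - 1 = m - 2 := by omega
    rw [hc1, hc2] at this
    exact this
  have hint : IntervalIntegrable Ψ volume 0 r₀ := by
    apply ContinuousOn.intervalIntegrable
    rw [uIcc_of_le hr.le]
    apply ContinuousOn.add
    · exact (continuousOn_const.mul (continuous_pow (m-2)).continuousOn).mul
        ((hu.continuousOn.mul hφ.continuousOn).comp
          ((continuous_id.smul continuous_const).continuousOn) hray)
    · exact (continuous_pow (m-1)).continuousOn.mul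
        ((hDh.comp ((continuous_id.smul continuous_const).continuousOn) hray).clm_apply
          continuousOn_const)
  rw [intervalIntegral.integral_eq_sub_of_hasDerivAt_of_le hr.le hcont hderiv hint]
  have hψr₀ : ψ r₀ = 0 := by
    have : u (r₀ • ω) = 0 := hu0 _ (by
      rw [mem_sphere_zero_iff_norm]; exact hnorm r₀ hr.le)
    simp [hψdef, hhdef, this]
  have hψ0 : ψ 0 = 0 := by
    simp [hψdef, zero_pow (show m - 1 ≠ 0 by omega)]
  rw [hψr₀, hψ0, sub_zero]

/-- Polar coordinates: the integral of an integrable indicator function over the ball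
vanishes if all ray integrals (with density `r ^ (m-1)`) vanish. -/
private lemma integral_eq_zero_of_rays' (m : ℕ) (hm : 2 ≤ m) (r₀ : ℝ) (hr : 0 < r₀)
    (g : E m → ℝ)
    (hG : Integrable ((Metric.ball (0 : E m) r₀).indicator g) volume)
    (hray : ∀ ω : Metric.sphere (0 : E m) 1,
      ∫ r in Ioo (0:ℝ) r₀, r ^ (m-1) * g (r • ω.1) = 0) :
    ∫ x, (Metric.ball (0 : E m) r₀).indicator g x = 0 := by
  haveI : Nonempty (Fin m) := ⟨⟨0, by omega⟩⟩
  set G := (Metric.ball (0 : E m) r₀).indicator g with hGdef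
  have hmp := (volume : Measure (E m)).measurePreserving_homeomorphUnitSphereProd
  rw [finrank_euclideanSpace_fin] at hmp
  have hemb := (homeomorphUnitSphereProd (E m)).measurableEmbedding
  set f : Metric.sphere (0 : E m) 1 × Ioi (0:ℝ) → ℝ := fun p => G (p.2.1 • p.1.1) with hf
  have hcomp : (f ∘ (homeomorphUnitSphereProd (E m))) = fun x : ({0}ᶜ : Set (E m)) => G x.1 := by
    funext x
    simp only [hf, Function.comp_apply, homeomorphUnitSphereProd_apply_fst_coe,
      homeomorphUnitSphereProd_apply_snd_coe]
    rw [smul_inv_smul₀ (norm_ne_zero_iff.2 x.2)]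
  have hint : Integrable f ((volume : Measure (E m)).toSphere.prod
      (Measure.volumeIoiPow (m - 1))) := by
    rw [← hmp.integrable_comp_emb hemb, hcomp]
    have h1 : Integrable G (volume.restrict ({0}ᶜ : Set (E m))) := hG.restrict
    rw [← map_comap_subtype_coe (measurableSet_singleton (0 : E m)).compl] at h1
    exact (MeasurableEmbedding.subtype_coe
      (measurableSet_singleton (0 : E m)).compl).integrable_map_iff.mp h1
  have hinner : ∀ ω : Metric.sphere (0 : E m) 1,
      (∫ r : Ioi (0:ℝ), G (r.1 • ω.1) ∂(Measure.volumeIoiPow (m - 1)))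
        = ∫ r in Ioo (0:ℝ) r₀, r ^ (m-1) * g (r • ω.1) := by
    intro ω
    have key : EqOn
        (fun r : ℝ => (Real.toNNReal (r ^ (m-1))) • G (r • ω.1))
        ((Ioo (0:ℝ) r₀).indicator (fun r => r ^ (m-1) * g (r • ω.1))) (Ioi 0) := by
      intro r hr'
      have hr' : (0:ℝ) < r := hr'
      have hnorm : ‖r • ω.1‖ = r := by
        rw [norm_smul, mem_sphere_zero_iff_norm.1 ω.2, mul_one, Real.norm_eq_abs,
          abs_of_pos hr']
      by_cases h : r < r₀
      · have h1 : r • ω.1 ∈ Metric.ball (0 : E m) r₀ := by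
          simp [Metric.mem_ball, dist_zero_right, hnorm, h]
        have h2 : r ∈ Ioo (0:ℝ) r₀ := ⟨hr', h⟩
        simp only [hGdef, indicator_of_mem h1, indicator_of_mem h2]
        rw [NNReal.smul_def, Real.coe_toNNReal _ (pow_nonneg hr'.le _), smul_eq_mul]
      · have h1 : r • ω.1 ∉ Metric.ball (0 : E m) r₀ := by
          simp [Metric.mem_ball, dist_zero_right, hnorm, h]
        have h2 : r ∉ Ioo (0:ℝ) r₀ := fun hc => h hc.2
        simp [hGdef, indicator_of_notMem h1, indicator_of_notMem h2]
    rw [Measure.volumeIoiPow]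
    simp only [ENNReal.ofReal]
    rw [integral_withDensity_eq_integral_smul
        ((measurable_subtype_coe.pow_const _).real_toNNReal) _,
      integral_subtype_comap measurableSet_Ioi
        (fun a : ℝ => Real.toNNReal (a ^ (m-1)) • G (a • ω.1)),
      setIntegral_congr_fun measurableSet_Ioi key,
      setIntegral_indicator measurableSet_Ioo, inter_eq_right.2 Ioo_subset_Ioi_self]
  calc ∫ x, G x = ∫ x : ({0}ᶜ : Set (E m)), G x.1 ∂(volume.comap Subtype.val) := by
        rw [integral_subtype_comap (measurableSet_singleton 0).compl fun x => G x,
          restrict_compl_singleton]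
    _ = ∫ x : ({0}ᶜ : Set (E m)), f ((homeomorphUnitSphereProd (E m)) x)
          ∂(volume.comap Subtype.val) := by
        refine integral_congr_ae (Filter.Eventually.of_forall fun x => ?_)
        simp only [hf, homeomorphUnitSphereProd_apply_fst_coe,
          homeomorphUnitSphereProd_apply_snd_coe]
        rw [smul_inv_smul₀ (norm_ne_zero_iff.2 x.2)]
    _ = ∫ p, f p ∂((volume : Measure (E m)).toSphere.prod (Measure.volumeIoiPow (m - 1))) :=
        hmp.integral_comp hemb f
    _ = ∫ ω : Metric.sphere (0 : E m) 1,
          (∫ r : Ioi (0:ℝ), G (r.1 • ω.1) ∂(Measure.volumeIoiPow (m - 1)))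
          ∂((volume : Measure (E m)).toSphere) := integral_prod f hint
    _ = 0 := by
        have : ∀ ω : Metric.sphere (0 : E m) 1,
            (∫ r : Ioi (0:ℝ), G (r.1 • ω.1) ∂(Measure.volumeIoiPow (m - 1))) = 0 := fun ω => by
          rw [hinner ω]; exact hray ω
        simp only [this, integral_zero]

private lemma integrable_parts' (m : ℕ) (hm : 2 ≤ m) (r₀ : ℝ) (hr : 0 < r₀)
    (u φ : E m → ℝ)
    (hu : ContDiffOn ℝ 1 u (Metric.closedBall 0 r₀))
    (hφ : ContDiffOn ℝ 1 φ (Metric.closedBall 0 r₀))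
    (hφ0 : φ 0 = 0) :
    IntegrableOn (fun x => φ x * ⟪gradient u x, ‖x‖⁻¹ • x⟫) (Metric.ball (0 : E m) r₀) ∧
    IntegrableOn (fun x => u x * (⟪gradient φ x, ‖x‖⁻¹ • x⟫ +
        ((m : ℝ) - 1) * φ x / ‖x‖)) (Metric.ball (0 : E m) r₀) := by
  set K := Metric.closedBall (0 : E m) r₀ with hKdef
  set B := Metric.ball (0 : E m) r₀ with hBdef
  have hBK : B ⊆ K := Metric.ball_subset_closedBall
  have hKc : IsCompact K := isCompact_closedBall _ _
  have h0K : (0 : E m) ∈ K := Metric.mem_closedBall_self hr.le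
  have hud : UniqueDiffOn ℝ K := uniqueDiffOn_convex (convex_closedBall _ _)
    (by rw [interior_closedBall _ hr.ne']; exact ⟨0, Metric.mem_ball_self hr⟩)
  have hmemK : ∀ x ∈ B, K ∈ nhds x := fun x hx =>
    Filter.mem_of_superset (Metric.isOpen_ball.mem_nhds hx) hBK
  have hDu : ContinuousOn (fderivWithin ℝ u K) K := hu.continuousOn_fderivWithin hud le_rfl
  have hDφ : ContinuousOn (fderivWithin ℝ φ K) K := hφ.continuousOn_fderivWithin hud le_rfl
  obtain ⟨Cu, hCu⟩ := hKc.exists_bound_of_continuousOn hDu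
  obtain ⟨Cφ, hCφ⟩ := hKc.exists_bound_of_continuousOn hDφ
  obtain ⟨Mu, hMu⟩ := hKc.exists_bound_of_continuousOn hu.continuousOn
  obtain ⟨Mφ, hMφ⟩ := hKc.exists_bound_of_continuousOn hφ.continuousOn
  have hCu0 : 0 ≤ Cu := le_trans (norm_nonneg _) (hCu 0 h0K)
  have hCφ0 : 0 ≤ Cφ := le_trans (norm_nonneg _) (hCφ 0 h0K)
  have hMu0 : 0 ≤ Mu := le_trans (norm_nonneg _) (hMu 0 h0K)
  have hMφ0 : 0 ≤ Mφ := le_trans (norm_nonneg _) (hMφ 0 h0K)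
  have hφlip : ∀ x ∈ K, |φ x| ≤ Cφ * ‖x‖ := by
    intro x hx
    have := (convex_closedBall (0 : E m) r₀).norm_image_sub_le_of_norm_fderivWithin_le
      (hφ.differentiableOn one_ne_zero) hCφ h0K hx
    simpa [hφ0] using this
  have hgradu : ∀ x ∈ B, gradient u x
      = (InnerProductSpace.toDual ℝ (E m)).symm (fderivWithin ℝ u K x) := fun x hx => by
    rw [gradient, fderivWithin_of_mem_nhds (hmemK x hx)]
  have hgradφ : ∀ x ∈ B, gradient φ x
      = (InnerProductSpace.toDual ℝ (E m)).symm (fderivWithin ℝ φ K x) := fun x hx => by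
    rw [gradient, fderivWithin_of_mem_nhds (hmemK x hx)]
  have hgradun : ∀ x ∈ B, ‖gradient u x‖ ≤ Cu := fun x hx => by
    rw [hgradu x hx, LinearIsometryEquiv.norm_map]; exact hCu x (hBK hx)
  have hgradφn : ∀ x ∈ B, ‖gradient φ x‖ ≤ Cφ := fun x hx => by
    rw [hgradφ x hx, LinearIsometryEquiv.norm_map]; exact hCφ x (hBK hx)
  have hvnorm : ∀ x : E m, ‖(‖x‖⁻¹ • x : E m)‖ ≤ 1 := by
    intro x
    rcases eq_or_ne x 0 with h | h
    · simp [h]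
    · rw [norm_smul, norm_inv, norm_norm, inv_mul_cancel₀ (norm_ne_zero_iff.2 h)]
  have hBmeas : MeasurableSet B := measurableSet_ball
  have hvm : AEStronglyMeasurable (fun x : E m => ‖x‖⁻¹ • x) (volume.restrict B) :=
    (measurable_norm.inv.smul measurable_id).aestronglyMeasurable
  have hφm : AEStronglyMeasurable φ (volume.restrict B) :=
    (hφ.continuousOn.mono hBK).aestronglyMeasurable hBmeas
  have hum : AEStronglyMeasurable u (volume.restrict B) :=
    (hu.continuousOn.mono hBK).aestronglyMeasurable hBmeas
  have hgum : AEStronglyMeasurable (gradient u) (volume.restrict B) := by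
    refine AEStronglyMeasurable.congr
      (((InnerProductSpace.toDual ℝ (E m)).symm.continuous.comp_continuousOn
        (hDu.mono hBK)).aestronglyMeasurable hBmeas) ?_
    exact (ae_restrict_iff' hBmeas).2 (ae_of_all _ fun x hx => (hgradu x hx).symm)
  have hgφm : AEStronglyMeasurable (gradient φ) (volume.restrict B) := by
    refine AEStronglyMeasurable.congr
      (((InnerProductSpace.toDual ℝ (E m)).symm.continuous.comp_continuousOn
        (hDφ.mono hBK)).aestronglyMeasurable hBmeas) ?_
    exact (ae_restrict_iff' hBmeas).2 (ae_of_all _ fun x hx => (hgradφ x hx).symm)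
  have hconst : ∀ c : ℝ, IntegrableOn (fun _ : E m => c) B :=
    fun c => integrableOn_const measure_ball_lt_top.ne
  constructor
  · refine Integrable.mono' (hconst (Mφ * Cu)) (hφm.mul (hgum.inner hvm)) ?_
    refine (ae_restrict_iff' hBmeas).2 (ae_of_all _ fun x hx => ?_)
    rw [Real.norm_eq_abs, abs_mul]
    have h1 : |⟪gradient u x, ‖x‖⁻¹ • x⟫| ≤ Cu := by
      refine le_trans (abs_real_inner_le_norm _ _) ?_
      calc ‖gradient u x‖ * ‖(‖x‖⁻¹ • x : E m)‖ ≤ Cu * 1 :=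
            mul_le_mul (hgradun x hx) (hvnorm x) (norm_nonneg _) hCu0
        _ = Cu := mul_one Cu
    exact mul_le_mul (hMφ x (hBK hx)) h1 (abs_nonneg _) hMφ0
  · have hdivm : AEStronglyMeasurable (fun x : E m => ((m:ℝ) - 1) * φ x / ‖x‖)
        (volume.restrict B) := by
      simp only [div_eq_mul_inv]
      exact (hφm.const_mul _).mul (measurable_norm.inv.aestronglyMeasurable)
    refine Integrable.mono' (hconst (Mu * (Cφ + ((m:ℝ) - 1) * Cφ)))
      (hum.mul ((hgφm.inner hvm).add hdivm)) ?_
    refine (ae_restrict_iff' hBmeas).2 (ae_of_all _ fun x hx => ?_)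
    rw [Real.norm_eq_abs, abs_mul]
    have hm1 : (0:ℝ) ≤ (m:ℝ) - 1 := by
      have : (1:ℝ) ≤ (m:ℝ) := by exact_mod_cast le_trans (by norm_num) hm
      linarith
    have h1 : |⟪gradient φ x, ‖x‖⁻¹ • x⟫| ≤ Cφ := by
      refine le_trans (abs_real_inner_le_norm _ _) ?_
      calc ‖gradient φ x‖ * ‖(‖x‖⁻¹ • x : E m)‖ ≤ Cφ * 1 :=
            mul_le_mul (hgradφn x hx) (hvnorm x) (norm_nonneg _) hCφ0
        _ = Cφ := mul_one Cφ
    have h2 : |((m:ℝ) - 1) * φ x / ‖x‖| ≤ ((m:ℝ) - 1) * Cφ := by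
      rcases eq_or_ne x 0 with h | h
      · simp [h, hφ0]
        positivity
      · have hx0 : (0:ℝ) < ‖x‖ := norm_pos_iff.2 h
        rw [abs_div, abs_mul, abs_of_nonneg hm1, abs_of_nonneg hx0.le,
          div_le_iff₀ hx0]
        calc ((m:ℝ)-1) * |φ x| ≤ ((m:ℝ)-1) * (Cφ * ‖x‖) :=
              mul_le_mul_of_nonneg_left (hφlip x (hBK hx)) hm1
          _ = ((m:ℝ)-1) * Cφ * ‖x‖ := by ring
    have h3 : |⟪gradient φ x, ‖x‖⁻¹ • x⟫ + ((m:ℝ) - 1) * φ x / ‖x‖|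
        ≤ Cφ + ((m:ℝ) - 1) * Cφ := le_trans (abs_add_le _ _) (add_le_add h1 h2)
    exact mul_le_mul (hMu x (hBK hx)) h3 (abs_nonneg _) hMu0

/-- Radial integration by parts on a Euclidean ball: for `u ∈ C¹(B̄)` vanishing
on the boundary sphere and `φ ∈ C¹(B̄)` with `φ(0) = 0`,
`∫_B φ ⟪∇u, x/‖x‖⟫ = −∫_B u (⟪∇φ, x/‖x‖⟫ + (m−1) φ/‖x‖)`,
both integrands being integrable on `B`. -/
theorem stmt_12 (m : ℕ) (hm : 2 ≤ m) (r₀ : ℝ) (hr : 0 < r₀)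
    (u φ : E m → ℝ)
    (hu : ContDiffOn ℝ 1 u (Metric.closedBall 0 r₀))
    (hu0 : ∀ x ∈ Metric.sphere (0 : E m) r₀, u x = 0)
    (hφ : ContDiffOn ℝ 1 φ (Metric.closedBall 0 r₀))
    (hφ0 : φ 0 = 0) :
    IntegrableOn (fun x => φ x * ⟪gradient u x, ‖x‖⁻¹ • x⟫)
      (Metric.ball (0 : E m) r₀) ∧
    IntegrableOn (fun x => u x * (⟪gradient φ x, ‖x‖⁻¹ • x⟫ +
        ((m : ℝ) - 1) * φ x / ‖x‖)) (Metric.ball (0 : E m) r₀) ∧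
    ∫ x in Metric.ball (0 : E m) r₀, φ x * ⟪gradient u x, ‖x‖⁻¹ • x⟫ =
      -∫ x in Metric.ball (0 : E m) r₀,
        u x * (⟪gradient φ x, ‖x‖⁻¹ • x⟫ + ((m : ℝ) - 1) * φ x / ‖x‖) := by
  obtain ⟨h1, h2⟩ := integrable_parts' m hm r₀ hr u φ hu hφ hφ0
  refine ⟨h1, h2, ?_⟩
  set g : E m → ℝ := fun x => φ x * ⟪gradient u x, ‖x‖⁻¹ • x⟫ +
    u x * (⟪gradient φ x, ‖x‖⁻¹ • x⟫ + ((m : ℝ) - 1) * φ x / ‖x‖) with hgdef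
  have hgint : IntegrableOn g (Metric.ball (0 : E m) r₀) := h1.add h2
  have hGint : Integrable ((Metric.ball (0 : E m) r₀).indicator g) volume :=
    (integrable_indicator_iff measurableSet_ball).2 hgint
  have hray : ∀ ω : Metric.sphere (0 : E m) 1,
      ∫ r in Ioo (0:ℝ) r₀, r ^ (m-1) * g (r • ω.1) = 0 := fun ω =>
    ray_ibp' m hm r₀ hr u φ hu hu0 hφ ω.1 (mem_sphere_zero_iff_norm.1 ω.2)
  have hzero : ∫ x in Metric.ball (0 : E m) r₀, g x = 0 := by
    rw [← integral_indicator measurableSet_ball]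
    exact integral_eq_zero_of_rays' m hm r₀ hr g hGint hray
  rw [hgdef] at hzero
  rw [integral_add h1 h2] at hzero
  linarith
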